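/- Consider F(ξ₁,ξ₂) = (1/π)[log((1-ξ₁²)(1-ξ₂²))] - (2/π) log((1 - ξ₁ξ₂ + √((1-ξ₁²)(1-ξ₂²)))/(ξ₂-ξ₁)) on the domain {(ξ₁,ξ₂) : -1 < ξ₁ < ξ₂ < 1}. Then (ξ₁,ξ₂) = (-1/√3, 1/√3) is a critical point of F. -/

import Mathlib

open Real

noncomputable def redF2 (p : ℝ × ℝ) : ℝ :=
  (1 / π) * Real.log ((1 - p.1 ^ 2) * (1 - p.2 ^ 2)) -
    (2 / π) * Real.log ((1 - p.1 * p.2 + Real.sqrt ((1 - p.1 ^ 2) * (1 - p.2 ^ 2))) / (p.2 - p.1))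

set_option maxHeartbeats 1600000 in
theorem redF2_critical_point :
    HasFDerivAt redF2 (0 : ℝ × ℝ →L[ℝ] ℝ) (-(1 / Real.sqrt 3), 1 / Real.sqrt 3) := by
  have h3 : Real.sqrt 3 ^ 2 = 3 := Real.sq_sqrt (by norm_num)
  have h3p : (0:ℝ) < Real.sqrt 3 := Real.sqrt_pos.mpr (by norm_num)
  set a : ℝ := 1 / Real.sqrt 3 with ha
  set p₀ : ℝ × ℝ := (-a, a) with hp₀
  have h1 : p₀.1 = -a := rfl
  have h2 : p₀.2 = a := rfl
  have ha2 : a ^ 2 = 1 / 3 := by rw [ha, div_pow, one_pow, h3]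
  have hapos : 0 < a := by positivity
  have ha0 : a ≠ 0 := ne_of_gt hapos
  have hπ : π ≠ 0 := Real.pi_ne_zero
  have hA : (1 - p₀.1 * p₀.1) * (1 - p₀.2 * p₀.2) = 4 / 9 := by
    rw [h1, h2]; nlinarith [ha2]
  have hsA : Real.sqrt ((1 - p₀.1 * p₀.1) * (1 - p₀.2 * p₀.2)) = 2 / 3 := by
    rw [hA, show (4:ℝ)/9 = (2/3)^2 by norm_num, Real.sqrt_sq (by norm_num)]
  have hA0 : (1 - p₀.1 * p₀.1) * (1 - p₀.2 * p₀.2) ≠ 0 := by rw [hA]; norm_num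
  have hd : p₀.2 - p₀.1 = 2 * a := by rw [h1, h2]; ring
  have hd0 : p₀.2 - p₀.1 ≠ 0 := by rw [hd]; positivity
  have hh : 1 - p₀.1 * p₀.2 = 1 + a ^ 2 := by rw [h1, h2]; ring
  have hnumval : 1 - p₀.1 * p₀.2 + Real.sqrt ((1 - p₀.1 * p₀.1) * (1 - p₀.2 * p₀.2)) = 2 := by
    rw [hh, hsA, ha2]; norm_num
  have hnum0 : 1 - p₀.1 * p₀.2 + Real.sqrt ((1 - p₀.1 * p₀.1) * (1 - p₀.2 * p₀.2)) ≠ 0 := by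
    rw [hnumval]; norm_num
  have hx : HasFDerivAt (fun p : ℝ × ℝ => p.1) (ContinuousLinearMap.fst ℝ ℝ ℝ) p₀ :=
    hasFDerivAt_fst
  have hy : HasFDerivAt (fun p : ℝ × ℝ => p.2) (ContinuousLinearMap.snd ℝ ℝ ℝ) p₀ :=
    hasFDerivAt_snd
  have hg1 := (hx.mul hx).const_sub 1
  have hg2 := (hy.mul hy).const_sub 1
  have hAder := hg1.mul hg2
  have hlog1 := hAder.log hA0
  have hhder := (hx.mul hy).const_sub 1
  have hsder := hAder.sqrt hA0
  have hnum := hhder.add hsder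
  have hden := hy.sub hx
  have hlognum := hnum.log hnum0
  have hlogden := hden.log hd0
  have H := (hlog1.const_mul (1 / π)).sub (((hlognum.sub hlogden)).const_mul (2 / π))
  -- eventual equality between redF2 and the split-log version
  have hc1 : ContinuousAt
      (fun p : ℝ × ℝ => 1 - p.1 * p.2 + Real.sqrt ((1 - p.1 * p.1) * (1 - p.2 * p.2))) p₀ := by
    fun_prop
  have hc2 : ContinuousAt (fun p : ℝ × ℝ => p.2 - p.1) p₀ := by fun_prop
  have he1 : ∀ᶠ p : ℝ × ℝ in nhds p₀,
      0 < 1 - p.1 * p.2 + Real.sqrt ((1 - p.1 * p.1) * (1 - p.2 * p.2)) :=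
    hc1.eventually (eventually_gt_nhds (show (0:ℝ) <
      1 - p₀.1 * p₀.2 + Real.sqrt ((1 - p₀.1 * p₀.1) * (1 - p₀.2 * p₀.2)) by
        rw [hnumval]; norm_num))
  have he2 : ∀ᶠ p : ℝ × ℝ in nhds p₀, 0 < p.2 - p.1 :=
    hc2.eventually (eventually_gt_nhds (show (0:ℝ) < p₀.2 - p₀.1 by rw [hd]; positivity))
  have hev : redF2 =ᶠ[nhds p₀] fun p : ℝ × ℝ =>
      (1 / π) * Real.log ((1 - p.1 * p.1) * (1 - p.2 * p.2)) -
        (2 / π) * (Real.log (1 - p.1 * p.2 + Real.sqrt ((1 - p.1 * p.1) * (1 - p.2 * p.2))) -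
          Real.log (p.2 - p.1)) := by
    filter_upwards [he1, he2] with p hp1 hp2
    simp only [redF2, pow_two]
    rw [Real.log_div (ne_of_gt hp1) (ne_of_gt hp2)]
  have hF : HasFDerivAt redF2 _ p₀ := H.congr_of_eventuallyEq hev
  refine hF.congr_fderiv ?_
  refine ContinuousLinearMap.ext fun v => ?_
  simp only [ContinuousLinearMap.zero_apply, ContinuousLinearMap.coe_smul',
    ContinuousLinearMap.coe_sub', ContinuousLinearMap.coe_add', Pi.smul_apply, Pi.sub_apply,
    Pi.add_apply, ContinuousLinearMap.coe_fst', ContinuousLinearMap.coe_snd',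
    ContinuousLinearMap.smul_apply, ContinuousLinearMap.sub_apply,
    ContinuousLinearMap.add_apply, smul_eq_mul, Pi.neg_apply, ContinuousLinearMap.neg_apply]
  simp only [Pi.mul_apply, hp₀]
  have e1 : 1 - -a * -a = 2/3 := by nlinarith [ha2]
  have e2 : 1 - a * a = 2/3 := by nlinarith [ha2]
  have e3 : 1 - -a * a = 4/3 := by nlinarith [ha2]
  have e4 : a - -a = 2*a := by ring
  have e5 : Real.sqrt ((1 - -a * -a) * (1 - a * a)) = 2/3 := by
    rw [e1, e2, show (2:ℝ)/3*(2/3) = (2/3)^2 by ring, Real.sqrt_sq (by norm_num)]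
  rw [e5, e1, e2, e3, e4]
  have haa : a * a = 1/3 := by nlinarith [ha2]
  clear_value a
  field_simp
  linear_combination (36 * (v.1 - v.2)) * ha2
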